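/- arXiv:2407.09664 — 2 statements merged into one kernel-verified Lean document; each statement's English description precedes it below -/
import Mathlib

section
/- Chatterjee's first lemma: under the exchangeable-pair setup, if there is a finite constant M > 0 with P(V ≤ M) = 1, then E[exp(λ f(X))] ≤ exp(M λ²/2) for every λ ∈ ℝ, and consequently P(f(X) ≥ t) ≤ exp(−t²/(2M)) for every t ≥ 0. -/
open MeasureTheory Filter
open scoped ENNReal

section helpers
variable {Ω 𝒳 : Type*} [MeasurableSpace Ω] [MeasurableSpace 𝒳]

lemma chatterjee_sinh_nonneg {x : ℝ} (hx : 0 ≤ x) : 0 ≤ Real.sinh x := by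
  rw [Real.sinh_eq]
  have : Real.exp (-x) ≤ Real.exp x := Real.exp_le_exp.mpr (by linarith)
  linarith

lemma chatterjee_sinh_le {x : ℝ} (hx : 0 ≤ x) : Real.sinh x ≤ x * Real.cosh x := by
  have h : MonotoneOn (fun y : ℝ => y * Real.cosh y - Real.sinh y) (Set.Ici 0) := by
    have hd : ∀ y : ℝ, HasDerivAt (fun y : ℝ => y * Real.cosh y - Real.sinh y)
        (y * Real.sinh y) y := by
      intro y
      have h1 : HasDerivAt (fun y : ℝ => y * Real.cosh y - Real.sinh y)
          (1 * Real.cosh y + id y * Real.sinh y - Real.cosh y) y := ((hasDerivAt_id y).mul (Real.hasDerivAt_cosh y)).sub (Real.hasDerivAt_sinh y)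
      convert h1 using 1
      simp [id]
      try ring
    refine monotoneOn_of_deriv_nonneg (convex_Ici 0) ?_ ?_ ?_
    · exact Continuous.continuousOn (by continuity)
    · intro y hy
      exact ((hd y).differentiableAt).differentiableWithinAt
    · intro y hy
      rw [(hd y).deriv]
      have : (0:ℝ) < y := by simpa using hy
      exact mul_nonneg this.le (chatterjee_sinh_nonneg this.le)
  have := h (Set.self_mem_Ici) (Set.mem_Ici.mpr hx) hx
  simpa using this

lemma chatterjee_exp_diff {a b : ℝ} :
    |Real.exp a - Real.exp b| ≤ |a - b| * (Real.exp a + Real.exp b) / 2 := by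
  wlog hab : b ≤ a generalizing a b
  · have h2 := this (a := b) (b := a) (le_of_not_ge hab)
    rw [abs_sub_comm, abs_sub_comm b a] at h2
    linarith [h2]
  rw [abs_of_nonneg (sub_nonneg.mpr (Real.exp_le_exp.mpr hab)), abs_of_nonneg (sub_nonneg.mpr hab)]
  have key := chatterjee_sinh_le (x := (a - b) / 2) (by linarith)
  have ea : Real.exp a = Real.exp ((a+b)/2) * Real.exp ((a-b)/2) := by
    rw [← Real.exp_add]; ring_nf
  have eb : Real.exp b = Real.exp ((a+b)/2) * Real.exp (-((a-b)/2)) := by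
    rw [← Real.exp_add]; ring_nf
  have e1 : Real.exp a - Real.exp b = 2 * Real.exp ((a+b)/2) * Real.sinh ((a-b)/2) := by
    rw [Real.sinh_eq, ea, eb]; ring
  have e2 : Real.exp a + Real.exp b = 2 * Real.exp ((a+b)/2) * Real.cosh ((a-b)/2) := by
    rw [Real.cosh_eq, ea, eb]; ring
  rw [e1, e2]
  have hexp : (0:ℝ) < Real.exp ((a+b)/2) := Real.exp_pos _
  nlinarith [key, hexp]

lemma chatterjee_abs_le_exp_add (x : ℝ) : |x| ≤ Real.exp x + Real.exp (-x) := by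
  have h1 : |x| ≤ Real.exp |x| := (Real.add_one_le_exp |x|).trans' (by linarith [abs_nonneg x])
  rcases abs_cases x with ⟨h, _⟩ | ⟨h, _⟩ <;> rw [h] at h1 <;>
    [linarith [Real.exp_pos (-x)]; linarith [Real.exp_pos x]]

end helpers

theorem chatterjee_first_lemma
    {Ω 𝒳 : Type*} [MeasurableSpace Ω] [MeasurableSpace 𝒳]
    (P : Measure Ω) [IsProbabilityMeasure P]
    (X X' : Ω → 𝒳) (hX : Measurable X) (hX' : Measurable X')
    (hexch : P.map (fun ω => (X ω, X' ω)) = P.map (fun ω => (X' ω, X ω)))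
    (f : 𝒳 → ℝ) (hf : Measurable f)
    (hmean : ∫ ω, f (X ω) ∂P = 0)
    (hL2 : Integrable (fun ω => (f (X ω)) ^ 2) P)
    (hmgf : ∀ t : ℝ, Integrable (fun ω => Real.exp (t * f (X ω))) P)
    (F : 𝒳 → 𝒳 → ℝ) (hFmeas : Measurable fun p : 𝒳 × 𝒳 => F p.1 p.2)
    (hFanti : ∀ x y, F x y = -F y x)
    (hFL2 : Integrable (fun ω => (F (X ω) (X' ω)) ^ 2) P)
    (hFcond : MeasureTheory.condExp (MeasurableSpace.comap X inferInstance) P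
        (fun ω => F (X ω) (X' ω)) =ᵐ[P] fun ω => f (X ω))
    (V : Ω → ℝ)
    (hV : V = fun ω => (1 / 2 : ℝ) *
      (MeasureTheory.condExp (MeasurableSpace.comap X inferInstance) P
        (fun ω' => |(f (X ω') - f (X' ω')) * F (X ω') (X' ω')|) ω))
    (M : ℝ) (hM : 0 < M)
    (hVbd : ∀ᵐ ω ∂P, V ω ≤ M) :
    (∀ l : ℝ, ∫ ω, Real.exp (l * f (X ω)) ∂P ≤ Real.exp (M * l ^ 2 / 2)) ∧
    (∀ t : ℝ, 0 ≤ t →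
      (P {ω | t ≤ f (X ω)}).toReal ≤ Real.exp (-(t ^ 2) / (2 * M))) := by
  classical
  have h𝔪 : MeasurableSpace.comap X inferInstance ≤ ‹MeasurableSpace Ω› := hX.comap_le
  haveI hsig : SigmaFinite (P.trim h𝔪) := inferInstance
  -- measurability basics
  have hmXX' : Measurable (fun ω => (X ω, X' ω)) := hX.prodMk hX'
  have hmX'X : Measurable (fun ω => (X' ω, X ω)) := hX'.prodMk hX
  have hfX : Measurable (fun ω => f (X ω)) := hf.comp hX
  have hfX' : Measurable (fun ω => f (X' ω)) := hf.comp hX'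
  have hFXX' : Measurable (fun ω => F (X ω) (X' ω)) := hFmeas.comp hmXX'
  have hXm : @Measurable Ω 𝒳 (MeasurableSpace.comap X inferInstance) _ X :=
    fun s hs => ⟨s, hs, rfl⟩
  have hsmX : ∀ (g : 𝒳 → ℝ), Measurable g →
      StronglyMeasurable[MeasurableSpace.comap X inferInstance] (fun ω => g (X ω)) :=
    fun g hg => Measurable.stronglyMeasurable (hg.comp hXm)
  -- exchange helpers
  have hswap_int : ∀ (g : 𝒳 × 𝒳 → ℝ), Measurable g →
      ∫ ω, g (X ω, X' ω) ∂P = ∫ ω, g (X' ω, X ω) ∂P := by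
    intro g hg
    calc ∫ ω, g (X ω, X' ω) ∂P
        = ∫ p, g p ∂(P.map (fun ω => (X ω, X' ω))) :=
          (integral_map hmXX'.aemeasurable hg.aestronglyMeasurable).symm
      _ = ∫ p, g p ∂(P.map (fun ω => (X' ω, X ω))) := by rw [hexch]
      _ = ∫ ω, g (X' ω, X ω) ∂P :=
          integral_map hmX'X.aemeasurable hg.aestronglyMeasurable
  have hswap_lint : ∀ (g : 𝒳 × 𝒳 → ℝ≥0∞), Measurable g →
      ∫⁻ ω, g (X ω, X' ω) ∂P = ∫⁻ ω, g (X' ω, X ω) ∂P := by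
    intro g hg
    calc ∫⁻ ω, g (X ω, X' ω) ∂P
        = ∫⁻ p, g p ∂(P.map (fun ω => (X ω, X' ω))) := (lintegral_map hg hmXX').symm
      _ = ∫⁻ p, g p ∂(P.map (fun ω => (X' ω, X ω))) := by rw [hexch]
      _ = ∫⁻ ω, g (X' ω, X ω) ∂P := lintegral_map hg hmX'X
  have hswap_integrable : ∀ (g : 𝒳 × 𝒳 → ℝ), Measurable g →
      Integrable (fun ω => g (X ω, X' ω)) P → Integrable (fun ω => g (X' ω, X ω)) P := by
    intro g hg h
    have h1 : Integrable g (P.map (fun ω => (X ω, X' ω))) :=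
      (integrable_map_measure hg.aestronglyMeasurable hmXX'.aemeasurable).mpr h
    rw [hexch] at h1
    exact (integrable_map_measure hg.aestronglyMeasurable hmX'X.aemeasurable).mp h1
  -- integrability toolkit
  have hprod_int : ∀ (u v : Ω → ℝ), AEStronglyMeasurable (fun ω => u ω * v ω) P →
      Integrable (fun ω => u ω ^ 2) P → Integrable (fun ω => v ω ^ 2) P →
      Integrable (fun ω => u ω * v ω) P := by
    intro u v hm hu hv
    refine Integrable.mono' (g := fun ω => u ω ^ 2 + v ω ^ 2) (hu.add hv) hm
      (ae_of_all _ fun ω => ?_)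
    have h1 : ‖u ω * v ω‖ = |u ω| * |v ω| := by rw [Real.norm_eq_abs, abs_mul]
    rw [h1]
    show |u ω| * |v ω| ≤ u ω ^ 2 + v ω ^ 2
    nlinarith [sq_nonneg (|u ω| - |v ω|), sq_abs (u ω), sq_abs (v ω), abs_nonneg (u ω),
      abs_nonneg (v ω)]
  have hexp_sq : ∀ t : ℝ, Integrable (fun ω => (Real.exp (t * f (X ω))) ^ 2) P := by
    intro t
    have h1 : (fun ω => (Real.exp (t * f (X ω))) ^ 2)
        = fun ω => Real.exp ((2 * t) * f (X ω)) := by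
      funext ω; rw [pow_two, ← Real.exp_add]; ring_nf
    rw [h1]; exact hmgf _
  have hmgf' : ∀ t : ℝ, Integrable (fun ω => Real.exp (t * f (X' ω))) P := by
    intro t
    exact hswap_integrable (fun p => Real.exp (t * f p.1))
      (Real.measurable_exp.comp ((hf.comp measurable_fst).const_mul t)) (hmgf t)
  have hexp_sq' : ∀ t : ℝ, Integrable (fun ω => (Real.exp (t * f (X' ω))) ^ 2) P := by
    intro t
    have h1 : (fun ω => (Real.exp (t * f (X' ω))) ^ 2)
        = fun ω => Real.exp ((2 * t) * f (X' ω)) := by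
      funext ω; rw [pow_two, ← Real.exp_add]; ring_nf
    rw [h1]; exact hmgf' _
  have hL2' : Integrable (fun ω => (f (X' ω)) ^ 2) P :=
    hswap_integrable (fun p => f p.1 ^ 2) ((hf.comp measurable_fst).pow_const 2) hL2
  have intF : Integrable (fun ω => F (X ω) (X' ω)) P := by
    refine Integrable.mono' (g := fun ω => 1 + F (X ω) (X' ω) ^ 2)
      ((integrable_const 1).add hFL2) hFXX'.aestronglyMeasurable (ae_of_all _ fun ω => ?_)
    rw [Real.norm_eq_abs]
    show |F (X ω) (X' ω)| ≤ 1 + F (X ω) (X' ω) ^ 2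
    nlinarith [sq_nonneg (|F (X ω) (X' ω)| - 1), sq_abs (F (X ω) (X' ω)),
      abs_nonneg (F (X ω) (X' ω))]
  have intfexp : ∀ l : ℝ, Integrable (fun ω => f (X ω) * Real.exp (l * f (X ω))) P := by
    intro l
    refine Integrable.mono'
      (g := fun ω => Real.exp ((l + 1) * f (X ω)) + Real.exp ((l - 1) * f (X ω)))
      ((hmgf (l + 1)).add (hmgf (l - 1)))
      (hfX.mul (Real.measurable_exp.comp (hfX.const_mul l))).aestronglyMeasurable
      (ae_of_all _ fun ω => ?_)
    set c := f (X ω)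
    have h1 : ‖c * Real.exp (l * c)‖ = |c| * Real.exp (l * c) := by
      rw [Real.norm_eq_abs, abs_mul, Real.abs_exp]
    rw [h1]
    have h2 : |c| * Real.exp (l * c) ≤ (Real.exp c + Real.exp (-c)) * Real.exp (l * c) :=
      mul_le_mul_of_nonneg_right (chatterjee_abs_le_exp_add c) (Real.exp_pos _).le
    refine h2.trans (le_of_eq ?_)
    rw [add_mul, ← Real.exp_add, ← Real.exp_add]
    ring_nf
  have intFexp : ∀ l : ℝ, Integrable
      (fun ω => Real.exp (l * f (X ω)) * F (X ω) (X' ω)) P := fun l =>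
    hprod_int _ _ ((Real.measurable_exp.comp (hfX.const_mul l)).mul
      hFXX').aestronglyMeasurable (hexp_sq l) hFL2
  have intFexp' : ∀ l : ℝ, Integrable
      (fun ω => Real.exp (l * f (X' ω)) * F (X ω) (X' ω)) P := fun l =>
    hprod_int _ _ ((Real.measurable_exp.comp (hfX'.const_mul l)).mul
      hFXX').aestronglyMeasurable (hexp_sq' l) hFL2
  have intDf2 : Integrable (fun ω => (f (X ω) - f (X' ω)) ^ 2) P := by
    refine Integrable.mono' (g := fun ω => 2 * f (X ω) ^ 2 + 2 * f (X' ω) ^ 2)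
      ((hL2.const_mul 2).add (hL2'.const_mul 2))
      (((hfX.sub hfX').pow_const 2).aestronglyMeasurable) (ae_of_all _ fun ω => ?_)
    rw [Real.norm_eq_abs, abs_of_nonneg (sq_nonneg _)]
    show (f (X ω) - f (X' ω)) ^ 2 ≤ 2 * f (X ω) ^ 2 + 2 * f (X' ω) ^ 2
    nlinarith [sq_nonneg (f (X ω) + f (X' ω))]
  have intG : Integrable (fun ω => |(f (X ω) - f (X' ω)) * F (X ω) (X' ω)|) P := by
    exact (hprod_int _ _ ((hfX.sub hfX').mul hFXX').aestronglyMeasurable intDf2 hFL2).abs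
  -- conditional expectation pull-out
  have hpull : ∀ l : ℝ, ∫ ω, Real.exp (l * f (X ω)) * F (X ω) (X' ω) ∂P
      = ∫ ω, Real.exp (l * f (X ω)) * f (X ω) ∂P := by
    intro l
    have hsm : StronglyMeasurable[MeasurableSpace.comap X inferInstance]
        (fun ω => Real.exp (l * f (X ω))) :=
      hsmX _ (Real.measurable_exp.comp (hf.const_mul l))
    have hmul := condExp_mul_of_stronglyMeasurable_left (μ := P) hsm
      (show Integrable ((fun ω => Real.exp (l * f (X ω))) * (fun ω => F (X ω) (X' ω))) P
        from intFexp l) intF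
    calc ∫ ω, Real.exp (l * f (X ω)) * F (X ω) (X' ω) ∂P
        = ∫ ω, (MeasureTheory.condExp (MeasurableSpace.comap X inferInstance) P
            ((fun ω => Real.exp (l * f (X ω))) * (fun ω => F (X ω) (X' ω)))) ω ∂P :=
          (integral_condExp h𝔪).symm
      _ = ∫ ω, Real.exp (l * f (X ω)) * (MeasureTheory.condExp
            (MeasurableSpace.comap X inferInstance) P (fun ω => F (X ω) (X' ω))) ω ∂P :=
          integral_congr_ae hmul
      _ = ∫ ω, Real.exp (l * f (X ω)) * f (X ω) ∂P := by
          refine integral_congr_ae ?_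
          filter_upwards [hFcond] with ω hω
          rw [hω]
  -- antisymmetry + exchangeability
  have hBA : ∀ l : ℝ, ∫ ω, Real.exp (l * f (X' ω)) * F (X ω) (X' ω) ∂P
      = - ∫ ω, Real.exp (l * f (X ω)) * F (X ω) (X' ω) ∂P := by
    intro l
    have h1 := hswap_int (fun p => Real.exp (l * f p.1) * F p.1 p.2)
      ((Real.measurable_exp.comp ((hf.comp measurable_fst).const_mul l)).mul hFmeas)
    have h2 : ∫ ω, Real.exp (l * f (X' ω)) * F (X' ω) (X ω) ∂P
        = ∫ ω, - (Real.exp (l * f (X' ω)) * F (X ω) (X' ω)) ∂P := by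
      refine integral_congr_ae (ae_of_all _ fun ω => ?_)
      show Real.exp (l * f (X' ω)) * F (X' ω) (X ω)
          = -(Real.exp (l * f (X' ω)) * F (X ω) (X' ω))
      rw [hFanti (X' ω) (X ω)]; ring
    simp only at h1
    rw [h2, integral_neg] at h1
    linarith [h1]
  -- condexp bound facts
  have hGmeas : Measurable (fun ω => |(f (X ω) - f (X' ω)) * F (X ω) (X' ω)|) :=
    ((hfX.sub hfX').mul hFXX').abs
  have hce_le : (MeasureTheory.condExp (MeasurableSpace.comap X inferInstance) P
      (fun ω => |(f (X ω) - f (X' ω)) * F (X ω) (X' ω)|)) ≤ᵐ[P] fun _ => 2 * M := by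
    filter_upwards [hVbd] with ω hω
    have h1 : V ω = 1 / 2 * (MeasureTheory.condExp (MeasurableSpace.comap X inferInstance) P
        (fun ω' => |(f (X ω') - f (X' ω')) * F (X ω') (X' ω')|)) ω := by rw [hV]
    rw [h1] at hω
    show (MeasureTheory.condExp (MeasurableSpace.comap X inferInstance) P
        (fun ω => |(f (X ω) - f (X' ω)) * F (X ω) (X' ω)|)) ω ≤ 2 * M
    linarith
  -- main lintegral bound via truncation
  have key_bound : ∀ (G e : Ω → ℝ), Measurable G → (∀ ω, 0 ≤ G ω) → Integrable G P →
      Measurable e → (∀ ω, 0 ≤ e ω) → Integrable e P →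
      ((MeasureTheory.condExp (MeasurableSpace.comap X inferInstance) P G) ≤ᵐ[P]
        fun _ => 2 * M) →
      @Measurable Ω ℝ (MeasurableSpace.comap X inferInstance) _ e →
      ∫⁻ ω, ENNReal.ofReal (e ω * G ω) ∂P ≤ ENNReal.ofReal (2 * M * ∫ ω, e ω ∂P) := by
    intro G e hGm hGnn hGint hem henn heint hceG hesm
    have htr : ∀ n : ℕ, Integrable (fun ω => min (e ω) n * G ω) P ∧
        ∫ ω, min (e ω) n * G ω ∂P ≤ 2 * M * ∫ ω, e ω ∂P := by
      intro n
      have hnn : ∀ ω, 0 ≤ min (e ω) (n:ℝ) := fun ω => le_min (henn ω) (Nat.cast_nonneg n)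
      have hsmn : StronglyMeasurable[MeasurableSpace.comap X inferInstance]
          (fun ω => min (e ω) (n:ℝ)) := (hesm.min measurable_const).stronglyMeasurable
      have hintn : Integrable (fun ω => min (e ω) (n:ℝ)) P := by
        refine Integrable.mono' heint (hem.min measurable_const).aestronglyMeasurable
          (ae_of_all _ fun ω => ?_)
        rw [Real.norm_eq_abs, abs_of_nonneg (hnn ω)]; exact min_le_left _ _
      have hintnG : Integrable ((fun ω => min (e ω) (n:ℝ)) * G) P := by
        refine Integrable.mono' (hGint.const_mul n)
          (((hem.min measurable_const).mul hGm).aestronglyMeasurable)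
          (ae_of_all _ fun ω => ?_)
        show ‖min (e ω) (n:ℝ) * G ω‖ ≤ (n:ℝ) * G ω
        rw [Real.norm_eq_abs, abs_of_nonneg (mul_nonneg (hnn ω) (hGnn ω))]
        exact mul_le_mul_of_nonneg_right (min_le_right _ _) (hGnn ω)
      refine ⟨hintnG, ?_⟩
      have hmul := condExp_mul_of_stronglyMeasurable_left (μ := P) hsmn hintnG hGint
      have hintcond : Integrable ((fun ω => min (e ω) (n:ℝ)) *
          (MeasureTheory.condExp (MeasurableSpace.comap X inferInstance) P G)) P :=
        (integrable_condExp).congr hmul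
      calc ∫ ω, min (e ω) (n:ℝ) * G ω ∂P
          = ∫ ω, (MeasureTheory.condExp (MeasurableSpace.comap X inferInstance) P
              ((fun ω => min (e ω) (n:ℝ)) * G)) ω ∂P := (integral_condExp h𝔪).symm
        _ = ∫ ω, min (e ω) (n:ℝ) * (MeasureTheory.condExp
              (MeasurableSpace.comap X inferInstance) P G) ω ∂P := integral_congr_ae hmul
        _ ≤ ∫ ω, min (e ω) (n:ℝ) * (2 * M) ∂P := by
            refine integral_mono_ae hintcond (hintn.mul_const _) ?_
            filter_upwards [hceG] with ω hω
            exact mul_le_mul_of_nonneg_left hω (hnn ω)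
        _ ≤ 2 * M * ∫ ω, e ω ∂P := by
            have h1 : ∫ ω, min (e ω) (n:ℝ) * (2 * M) ∂P
                = (∫ ω, min (e ω) (n:ℝ) ∂P) * (2 * M) := by
              rw [integral_mul_const]
            rw [h1, mul_comm]
            refine mul_le_mul_of_nonneg_left ?_ (by positivity)
            exact integral_mono hintn heint (fun ω => min_le_left _ _)
    have hsup : ∀ ω, (⨆ n : ℕ, ENNReal.ofReal (min (e ω) n * G ω))
        = ENNReal.ofReal (e ω * G ω) := by
      intro ω
      apply le_antisymm
      · exact iSup_le fun n => ENNReal.ofReal_le_ofReal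
          (mul_le_mul_of_nonneg_right (min_le_left _ _) (hGnn ω))
      · refine le_trans (le_of_eq ?_)
          (le_iSup (fun n : ℕ => ENNReal.ofReal (min (e ω) n * G ω)) ⌈e ω⌉₊)
        rw [min_eq_left (Nat.le_ceil _)]
    have hmono : ∀ ω, Monotone (fun n : ℕ => ENNReal.ofReal (min (e ω) n * G ω)) := by
      intro ω a b hab
      exact ENNReal.ofReal_le_ofReal (mul_le_mul_of_nonneg_right
        (min_le_min le_rfl (Nat.cast_le.mpr hab)) (hGnn ω))
    calc ∫⁻ ω, ENNReal.ofReal (e ω * G ω) ∂P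
        = ∫⁻ ω, ⨆ n : ℕ, ENNReal.ofReal (min (e ω) n * G ω) ∂P :=
          lintegral_congr fun ω => (hsup ω).symm
      _ = ⨆ n : ℕ, ∫⁻ ω, ENNReal.ofReal (min (e ω) n * G ω) ∂P :=
          lintegral_iSup' (fun n => ((hem.min measurable_const).mul
            hGm).ennreal_ofReal.aemeasurable) (ae_of_all _ hmono)
      _ ≤ ENNReal.ofReal (2 * M * ∫ ω, e ω ∂P) := by
          refine iSup_le fun n => ?_
          rw [← ofReal_integral_eq_lintegral_ofReal (htr n).1
            (ae_of_all _ fun ω => mul_nonneg (le_min (henn ω) (Nat.cast_nonneg n)) (hGnn ω))]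
          exact ENNReal.ofReal_le_ofReal (htr n).2
  have hGbound : ∀ l : ℝ, ∫⁻ ω, ENNReal.ofReal (Real.exp (l * f (X ω)) *
      |(f (X ω) - f (X' ω)) * F (X ω) (X' ω)|) ∂P
      ≤ ENNReal.ofReal (2 * M * ∫ ω, Real.exp (l * f (X ω)) ∂P) := by
    intro l
    refine key_bound _ _ hGmeas (fun ω => abs_nonneg _) intG
      (Real.measurable_exp.comp (hfX.const_mul l)) (fun ω => (Real.exp_pos _).le) (hmgf l)
      hce_le ?_
    exact Real.measurable_exp.comp (Measurable.const_mul (hf.comp hXm) l)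
  have hGbound' : ∀ l : ℝ, ∫⁻ ω, ENNReal.ofReal (Real.exp (l * f (X' ω)) *
      |(f (X ω) - f (X' ω)) * F (X ω) (X' ω)|) ∂P
      ≤ ENNReal.ofReal (2 * M * ∫ ω, Real.exp (l * f (X ω)) ∂P) := by
    intro l
    have hwm : Measurable (fun p : 𝒳 × 𝒳 => ENNReal.ofReal
        (Real.exp (l * f p.2) * |(f p.1 - f p.2) * F p.1 p.2|)) := by
      refine Measurable.ennreal_ofReal ?_
      exact (Real.measurable_exp.comp ((hf.comp measurable_snd).const_mul l)).mul
        (((hf.comp measurable_fst).sub (hf.comp measurable_snd)).mul hFmeas).abs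
    have h1 := hswap_lint _ hwm
    have h2 : ∫⁻ ω, ENNReal.ofReal (Real.exp (l * f (X ω)) *
        |(f (X' ω) - f (X ω)) * F (X' ω) (X ω)|) ∂P
        = ∫⁻ ω, ENNReal.ofReal (Real.exp (l * f (X ω)) *
          |(f (X ω) - f (X' ω)) * F (X ω) (X' ω)|) ∂P := by
      refine lintegral_congr fun ω => ?_
      congr 2
      rw [hFanti (X' ω) (X ω)]
      ring_nf
    calc ∫⁻ ω, ENNReal.ofReal (Real.exp (l * f (X' ω)) *
          |(f (X ω) - f (X' ω)) * F (X ω) (X' ω)|) ∂P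
        = ∫⁻ ω, ENNReal.ofReal (Real.exp (l * f (X ω)) *
            |(f (X' ω) - f (X ω)) * F (X' ω) (X ω)|) ∂P := h1
      _ = ∫⁻ ω, ENNReal.ofReal (Real.exp (l * f (X ω)) *
            |(f (X ω) - f (X' ω)) * F (X ω) (X' ω)|) ∂P := h2
      _ ≤ ENNReal.ofReal (2 * M * ∫ ω, Real.exp (l * f (X ω)) ∂P) := hGbound l
  -- the derivative bound
  have hmnn : ∀ l : ℝ, 0 ≤ ∫ ω, Real.exp (l * f (X ω)) ∂P :=
    fun l => integral_nonneg fun ω => (Real.exp_pos _).le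
  have hI_bound : ∀ l : ℝ, |∫ ω, f (X ω) * Real.exp (l * f (X ω)) ∂P|
      ≤ M * |l| * ∫ ω, Real.exp (l * f (X ω)) ∂P := by
    intro l
    have hIA : ∫ ω, f (X ω) * Real.exp (l * f (X ω)) ∂P
        = ∫ ω, Real.exp (l * f (X ω)) * F (X ω) (X' ω) ∂P := by
      calc ∫ ω, f (X ω) * Real.exp (l * f (X ω)) ∂P
          = ∫ ω, Real.exp (l * f (X ω)) * f (X ω) ∂P :=
            integral_congr_ae (ae_of_all _ fun ω => mul_comm _ _)
        _ = ∫ ω, Real.exp (l * f (X ω)) * F (X ω) (X' ω) ∂P := (hpull l).symm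
    have hu_int : Integrable (fun ω => (Real.exp (l * f (X ω)) - Real.exp (l * f (X' ω)))
        * F (X ω) (X' ω)) P := by
      have h1 : (fun ω => (Real.exp (l * f (X ω)) - Real.exp (l * f (X' ω))) * F (X ω) (X' ω))
          = fun ω => Real.exp (l * f (X ω)) * F (X ω) (X' ω)
            - Real.exp (l * f (X' ω)) * F (X ω) (X' ω) := by
        funext ω; ring
      rw [h1]
      exact (intFexp l).sub (intFexp' l)
    have h2A : ∫ ω, (Real.exp (l * f (X ω)) - Real.exp (l * f (X' ω))) * F (X ω) (X' ω) ∂P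
        = 2 * ∫ ω, Real.exp (l * f (X ω)) * F (X ω) (X' ω) ∂P := by
      have h1 : (fun ω => (Real.exp (l * f (X ω)) - Real.exp (l * f (X' ω))) * F (X ω) (X' ω))
          = fun ω => Real.exp (l * f (X ω)) * F (X ω) (X' ω)
            - Real.exp (l * f (X' ω)) * F (X ω) (X' ω) := by
        funext ω; ring
      rw [h1, integral_sub (intFexp l) (intFexp' l), hBA l]
      ring
    have hptw : ∀ ω, |(Real.exp (l * f (X ω)) - Real.exp (l * f (X' ω))) * F (X ω) (X' ω)|
        ≤ |l| / 2 * (Real.exp (l * f (X ω)) * |(f (X ω) - f (X' ω)) * F (X ω) (X' ω)|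
          + Real.exp (l * f (X' ω)) * |(f (X ω) - f (X' ω)) * F (X ω) (X' ω)|) := by
      intro ω
      rw [abs_mul]
      have h1 := chatterjee_exp_diff (a := l * f (X ω)) (b := l * f (X' ω))
      have h2 : |l * f (X ω) - l * f (X' ω)| = |l| * |f (X ω) - f (X' ω)| := by
        rw [← abs_mul]; ring_nf
      rw [h2] at h1
      have h3 : |(Real.exp (l * f (X ω)) - Real.exp (l * f (X' ω)))| * |F (X ω) (X' ω)|
          ≤ |l| * |f (X ω) - f (X' ω)| * (Real.exp (l * f (X ω)) + Real.exp (l * f (X' ω))) / 2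
            * |F (X ω) (X' ω)| :=
        mul_le_mul_of_nonneg_right h1 (abs_nonneg _)
      refine h3.trans (le_of_eq ?_)
      rw [abs_mul]
      ring
    have hlin : ∫⁻ ω, ENNReal.ofReal (|(Real.exp (l * f (X ω)) - Real.exp (l * f (X' ω)))
        * F (X ω) (X' ω)|) ∂P
        ≤ ENNReal.ofReal (|l| * (2 * M * ∫ ω, Real.exp (l * f (X ω)) ∂P)) := by
      calc ∫⁻ ω, ENNReal.ofReal (|(Real.exp (l * f (X ω)) - Real.exp (l * f (X' ω)))
            * F (X ω) (X' ω)|) ∂P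
          ≤ ∫⁻ ω, ENNReal.ofReal (|l| / 2)
              * (ENNReal.ofReal (Real.exp (l * f (X ω)) *
                  |(f (X ω) - f (X' ω)) * F (X ω) (X' ω)|)
                + ENNReal.ofReal (Real.exp (l * f (X' ω)) *
                  |(f (X ω) - f (X' ω)) * F (X ω) (X' ω)|)) ∂P := by
            refine lintegral_mono fun ω => ?_
            rw [← ENNReal.ofReal_add (by positivity) (by positivity),
              ← ENNReal.ofReal_mul (by positivity)]
            exact ENNReal.ofReal_le_ofReal (hptw ω)
        _ = ENNReal.ofReal (|l| / 2)
            * ((∫⁻ ω, ENNReal.ofReal (Real.exp (l * f (X ω)) *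
                  |(f (X ω) - f (X' ω)) * F (X ω) (X' ω)|) ∂P)
              + ∫⁻ ω, ENNReal.ofReal (Real.exp (l * f (X' ω)) *
                  |(f (X ω) - f (X' ω)) * F (X ω) (X' ω)|) ∂P) := by
            rw [lintegral_const_mul' _ _ ENNReal.ofReal_ne_top, lintegral_add_left]
            exact ((Real.measurable_exp.comp (hfX.const_mul l)).mul
              hGmeas).ennreal_ofReal
        _ ≤ ENNReal.ofReal (|l| / 2)
            * (ENNReal.ofReal (2 * M * ∫ ω, Real.exp (l * f (X ω)) ∂P)
              + ENNReal.ofReal (2 * M * ∫ ω, Real.exp (l * f (X ω)) ∂P)) :=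
            mul_le_mul' le_rfl (add_le_add (hGbound l) (hGbound' l))
        _ = ENNReal.ofReal (|l| * (2 * M * ∫ ω, Real.exp (l * f (X ω)) ∂P)) := by
            rw [← ENNReal.ofReal_add (by positivity) (by positivity),
              ← ENNReal.ofReal_mul (by positivity)]
            congr 1
            ring
    have habs : |∫ ω, (Real.exp (l * f (X ω)) - Real.exp (l * f (X' ω))) * F (X ω) (X' ω) ∂P|
        ≤ |l| * (2 * M * ∫ ω, Real.exp (l * f (X ω)) ∂P) := by
      have h1 : |∫ ω, (Real.exp (l * f (X ω)) - Real.exp (l * f (X' ω))) * F (X ω) (X' ω) ∂P|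
          ≤ ∫ ω, |(Real.exp (l * f (X ω)) - Real.exp (l * f (X' ω))) * F (X ω) (X' ω)| ∂P := by
        have h0 := norm_integral_le_integral_norm (μ := P)
          (fun ω => (Real.exp (l * f (X ω)) - Real.exp (l * f (X' ω))) * F (X ω) (X' ω))
        simp only [Real.norm_eq_abs] at h0
        exact h0
      refine h1.trans ?_
      rw [integral_eq_lintegral_of_nonneg_ae (ae_of_all _ fun ω => abs_nonneg _)
        hu_int.abs.aestronglyMeasurable]
      exact ENNReal.toReal_le_of_le_ofReal (by positivity) hlin
    rw [hIA]
    rw [h2A] at habs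
    rw [abs_mul, abs_two] at habs
    have := hmnn l
    nlinarith [abs_nonneg (∫ ω, Real.exp (l * f (X ω)) * F (X ω) (X' ω) ∂P), abs_nonneg l]
  -- differentiability of the mgf
  have hderiv : ∀ l : ℝ, HasDerivAt (fun x : ℝ => ∫ ω, Real.exp (x * f (X ω)) ∂P)
      (∫ ω, f (X ω) * Real.exp (l * f (X ω)) ∂P) l := by
    intro l
    have h := hasDerivAt_integral_of_dominated_loc_of_deriv_le (μ := P) (x₀ := l)
      (F := fun (x : ℝ) ω => Real.exp (x * f (X ω)))
      (F' := fun (x : ℝ) ω => f (X ω) * Real.exp (x * f (X ω)))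
      (bound := fun ω => Real.exp ((l + 2) * f (X ω)) + Real.exp ((l - 2) * f (X ω)))
      (Metric.ball_mem_nhds l one_pos)
      (Filter.Eventually.of_forall fun x =>
        (Real.measurable_exp.comp (hfX.const_mul x)).aestronglyMeasurable)
      (hmgf l)
      ((hfX.mul (Real.measurable_exp.comp (hfX.const_mul l))).aestronglyMeasurable)
      ?_ ((hmgf (l + 2)).add (hmgf (l - 2))) ?_
    · exact h.2
    · refine ae_of_all _ fun ω x hx => ?_
      have hxl : |x - l| < 1 := by
        have := Metric.mem_ball.mp hx
        rwa [Real.dist_eq] at this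
      have h1 : |f (X ω)| ≤ Real.exp |f (X ω)| := by
        linarith [Real.add_one_le_exp |f (X ω)|]
      have h3 : (x - l) * f (X ω) ≤ |f (X ω)| := by
        refine le_trans (le_abs_self _) ?_
        rw [abs_mul]
        calc |x - l| * |f (X ω)| ≤ 1 * |f (X ω)| :=
              mul_le_mul_of_nonneg_right hxl.le (abs_nonneg _)
          _ = |f (X ω)| := one_mul _
      have h4 : x * f (X ω) - l * f (X ω) = (x - l) * f (X ω) := by ring
      have hb : Real.exp (2 * |f (X ω)| + l * f (X ω))
          ≤ Real.exp ((l + 2) * f (X ω)) + Real.exp ((l - 2) * f (X ω)) := by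
        rcases abs_cases (f (X ω)) with ⟨h, _⟩ | ⟨h, _⟩
        · rw [h]
          have he : 2 * f (X ω) + l * f (X ω) = (l + 2) * f (X ω) := by ring
          rw [he]
          linarith [Real.exp_pos ((l - 2) * f (X ω))]
        · rw [h]
          have he : 2 * -f (X ω) + l * f (X ω) = (l - 2) * f (X ω) := by ring
          rw [he]
          linarith [Real.exp_pos ((l + 2) * f (X ω))]
      calc ‖f (X ω) * Real.exp (x * f (X ω))‖
          = |f (X ω)| * Real.exp (x * f (X ω)) := by
            rw [Real.norm_eq_abs, abs_mul, Real.abs_exp]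
        _ ≤ Real.exp |f (X ω)| * Real.exp (x * f (X ω)) :=
            mul_le_mul_of_nonneg_right h1 (Real.exp_pos _).le
        _ = Real.exp (|f (X ω)| + x * f (X ω)) := (Real.exp_add _ _).symm
        _ ≤ Real.exp (2 * |f (X ω)| + l * f (X ω)) :=
            Real.exp_le_exp.mpr (by linarith [h3, h4])
        _ ≤ _ := hb
    · refine ae_of_all _ fun ω x hx => ?_
      have h := (hasDerivAt_mul_const (f (X ω))).exp (x := x)
      exact h.congr_deriv (by ring)
  -- the ODE comparison argument
  have hψd : ∀ l : ℝ, HasDerivAt (fun x : ℝ => (∫ ω, Real.exp (x * f (X ω)) ∂P)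
      * Real.exp (-(M * x ^ 2 / 2)))
      (((∫ ω, f (X ω) * Real.exp (l * f (X ω)) ∂P)
        - M * l * ∫ ω, Real.exp (l * f (X ω)) ∂P) * Real.exp (-(M * l ^ 2 / 2))) l := by
    intro l
    have h1 : HasDerivAt (fun x : ℝ => -(M * x ^ 2 / 2)) (-(M * l)) l := by
      have h2 : HasDerivAt (fun x : ℝ => -(M / 2 * x ^ 2)) (-(M / 2 * ((2:ℕ) * l ^ (2 - 1)))) l :=
        ((hasDerivAt_pow 2 l).const_mul (M / 2)).neg
      convert h2 using 1
      · funext x; ring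
      · push_cast; ring
    have h3 := (hderiv l).mul h1.exp
    exact h3.congr_deriv (by ring)
  have hψle : ∀ l : ℝ, (∫ ω, Real.exp (l * f (X ω)) ∂P) * Real.exp (-(M * l ^ 2 / 2)) ≤ 1 := by
    have hψ0 : (∫ ω, Real.exp ((0:ℝ) * f (X ω)) ∂P) * Real.exp (-(M * (0:ℝ) ^ 2 / 2)) = 1 := by
      simp
    intro l
    rcases le_or_gt 0 l with h | h
    · have hanti : AntitoneOn (fun x : ℝ => (∫ ω, Real.exp (x * f (X ω)) ∂P)
          * Real.exp (-(M * x ^ 2 / 2))) (Set.Ici 0) := by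
        refine antitoneOn_of_deriv_nonpos (convex_Ici 0) ?_ ?_ ?_
        · exact fun x _ => ((hψd x).differentiableAt).continuousAt.continuousWithinAt
        · exact fun x _ => ((hψd x).differentiableAt).differentiableWithinAt
        · intro x hx
          rw [(hψd x).deriv]
          rw [interior_Ici] at hx
          have hx0 : 0 < x := hx
          have hI := hI_bound x
          rw [abs_of_pos hx0] at hI
          have h5 : (∫ ω, f (X ω) * Real.exp (x * f (X ω)) ∂P)
              ≤ M * x * ∫ ω, Real.exp (x * f (X ω)) ∂P := le_trans (le_abs_self _) hI
          have hb := Real.exp_pos (-(M * x ^ 2 / 2))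
          nlinarith
      exact le_trans (hanti Set.self_mem_Ici h h) (le_of_eq hψ0)
    · have hmono : MonotoneOn (fun x : ℝ => (∫ ω, Real.exp (x * f (X ω)) ∂P)
          * Real.exp (-(M * x ^ 2 / 2))) (Set.Iic 0) := by
        refine monotoneOn_of_deriv_nonneg (convex_Iic 0) ?_ ?_ ?_
        · exact fun x _ => ((hψd x).differentiableAt).continuousAt.continuousWithinAt
        · exact fun x _ => ((hψd x).differentiableAt).differentiableWithinAt
        · intro x hx
          rw [(hψd x).deriv]
          rw [interior_Iic] at hx
          have hx0 : x < 0 := hx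
          have hI := hI_bound x
          rw [abs_of_neg hx0] at hI
          have h5 : -(M * -x * ∫ ω, Real.exp (x * f (X ω)) ∂P)
              ≤ ∫ ω, f (X ω) * Real.exp (x * f (X ω)) ∂P := by
            have := neg_abs_le (∫ ω, f (X ω) * Real.exp (x * f (X ω)) ∂P)
            linarith
          have hb := Real.exp_pos (-(M * x ^ 2 / 2))
          nlinarith
      exact le_trans (hmono (Set.mem_Iic.mpr h.le) Set.self_mem_Iic h.le) (le_of_eq hψ0)
  have hpart1 : ∀ l : ℝ, ∫ ω, Real.exp (l * f (X ω)) ∂P ≤ Real.exp (M * l ^ 2 / 2) := by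
    intro l
    have h := hψle l
    have h2 := mul_le_mul_of_nonneg_right h (Real.exp_pos (M * l ^ 2 / 2)).le
    rw [one_mul, mul_assoc, ← Real.exp_add, neg_add_cancel, Real.exp_zero, mul_one] at h2
    exact h2
  refine ⟨hpart1, ?_⟩
  intro t ht
  have hint := hmgf (t / M)
  have h := ProbabilityTheory.measure_ge_le_exp_mul_mgf (μ := P) (X := fun ω => f (X ω))
    (ε := t) (t := t / M) (div_nonneg ht hM.le) hint
  refine h.trans ?_
  have hmgfle : ProbabilityTheory.mgf (fun ω => f (X ω)) P (t / M)
      ≤ Real.exp (M * (t / M) ^ 2 / 2) := by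
    have := hpart1 (t / M)
    simpa [ProbabilityTheory.mgf] using this
  calc Real.exp (-(t / M) * t) * ProbabilityTheory.mgf (fun ω => f (X ω)) P (t / M)
      ≤ Real.exp (-(t / M) * t) * Real.exp (M * (t / M) ^ 2 / 2) :=
        mul_le_mul_of_nonneg_left hmgfle (Real.exp_pos _).le
    _ = Real.exp (-(t ^ 2) / (2 * M)) := by
        rw [← Real.exp_add]
        congr 1
        field_simp
        ring
end

section
/- Chatterjee's second lemma: under the exchangeable-pair setup, if there are finite constants A, B > 0 with P(V ≤ A·f(X) + B) = 1, then E[exp(λ f(X))] ≤ exp( B λ² / (2(1 − Aλ)) ) for every λ ∈ [0, 1/A), and consequently P(f(X) ≥ t) ≤ exp( −t² / (2B + 2At) ) for every t ≥ 0. -/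
open MeasureTheory

lemma aux_abs_le_exps (u : ℝ) : |u| ≤ Real.exp u + Real.exp (-u) := by
  rcases le_total 0 u with h | h
  · rw [abs_of_nonneg h]
    nlinarith [Real.add_one_le_exp u, Real.exp_pos (-u)]
  · rw [abs_of_nonpos h]
    nlinarith [Real.add_one_le_exp (-u), Real.exp_pos u]

lemma aux_exp_mul_le {a b x : ℝ} (u : ℝ) (h1 : a ≤ x) (h2 : x ≤ b) :
    Real.exp (x * u) ≤ Real.exp (a * u) + Real.exp (b * u) := by
  rcases le_total 0 u with h | h
  · have : x * u ≤ b * u := mul_le_mul_of_nonneg_right h2 h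
    nlinarith [Real.exp_le_exp.mpr this, Real.exp_pos (a * u)]
  · have : x * u ≤ a * u := mul_le_mul_of_nonpos_right h1 h
    nlinarith [Real.exp_le_exp.mpr this, Real.exp_pos (b * u)]

lemma aux_sinh_le (x : ℝ) (hx : 0 ≤ x) : Real.sinh x ≤ x * Real.cosh x := by
  have hd : ∀ y : ℝ, HasDerivAt (fun y => y * Real.cosh y - Real.sinh y) (y * Real.sinh y) y := by
    intro y
    have h1 := (hasDerivAt_id y).mul (Real.hasDerivAt_cosh y)
    have h2 := h1.sub (Real.hasDerivAt_sinh y)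
    simp only [id_eq, one_mul] at h2
    refine h2.congr_deriv ?_
    ring
  have hmono : MonotoneOn (fun y => y * Real.cosh y - Real.sinh y) (Set.Ici 0) := by
    refine monotoneOn_of_deriv_nonneg (convex_Ici 0) ?_ ?_ ?_
    · exact ((continuous_id.mul Real.continuous_cosh).sub Real.continuous_sinh).continuousOn
    · exact fun y _ => (hd y).differentiableAt.differentiableWithinAt
    · intro y hy
      rw [interior_Ici] at hy
      rw [(hd y).deriv]
      exact mul_nonneg (le_of_lt hy) (Real.sinh_nonneg_iff.mpr (le_of_lt hy))
  have := hmono (Set.self_mem_Ici) (Set.mem_Ici.mpr hx) hx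
  simp at this
  linarith

lemma aux_abs_exp_sub_exp (a b : ℝ) :
    |Real.exp a - Real.exp b| ≤ |a - b| * (Real.exp a + Real.exp b) / 2 := by
  have key : ∀ a b : ℝ, b ≤ a →
      Real.exp a - Real.exp b ≤ (a - b) * (Real.exp a + Real.exp b) / 2 := by
    intro a b hba
    have hs : (0:ℝ) ≤ (a - b) / 2 := by linarith
    have h := aux_sinh_le ((a - b) / 2) hs
    rw [Real.sinh_eq, Real.cosh_eq] at h
    have hc := Real.exp_pos ((a + b) / 2)
    have h2 := mul_le_mul_of_nonneg_left h hc.le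
    have e1 : Real.exp ((a + b) / 2) * Real.exp ((a - b) / 2) = Real.exp a := by
      rw [← Real.exp_add]; ring_nf
    have e2 : Real.exp ((a + b) / 2) * Real.exp (-((a - b) / 2)) = Real.exp b := by
      rw [← Real.exp_add]; ring_nf
    nlinarith [h2, e1, e2]
  rcases le_total b a with h | h
  · rw [abs_of_nonneg (by nlinarith [Real.exp_le_exp.mpr h] : (0:ℝ) ≤ Real.exp a - Real.exp b),
      abs_of_nonneg (by linarith : (0:ℝ) ≤ a - b)]
    exact key a b h
  · rw [abs_of_nonpos (by nlinarith [Real.exp_le_exp.mpr h] : Real.exp a - Real.exp b ≤ 0),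
      abs_of_nonpos (by linarith : a - b ≤ 0)]
    have := key b a h
    nlinarith


set_option maxHeartbeats 2000000 in
theorem chatterjee_second_lemma
    {Ω 𝒳 : Type*} [MeasurableSpace Ω] [MeasurableSpace 𝒳]
    (P : Measure Ω) [IsProbabilityMeasure P]
    (X X' : Ω → 𝒳) (hX : Measurable X) (hX' : Measurable X')
    (hexch : P.map (fun ω => (X ω, X' ω)) = P.map (fun ω => (X' ω, X ω)))
    (f : 𝒳 → ℝ) (hf : Measurable f)
    (hmean : ∫ ω, f (X ω) ∂P = 0)
    (hL2 : Integrable (fun ω => (f (X ω)) ^ 2) P)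
    (hmgf : ∀ t : ℝ, Integrable (fun ω => Real.exp (t * f (X ω))) P)
    (F : 𝒳 → 𝒳 → ℝ) (hFmeas : Measurable fun p : 𝒳 × 𝒳 => F p.1 p.2)
    (hFanti : ∀ x y, F x y = -F y x)
    (hFL2 : Integrable (fun ω => (F (X ω) (X' ω)) ^ 2) P)
    (hFcond : MeasureTheory.condExp (MeasurableSpace.comap X inferInstance) P
        (fun ω => F (X ω) (X' ω)) =ᵐ[P] fun ω => f (X ω))
    (V : Ω → ℝ)
    (hV : V = fun ω => (1 / 2 : ℝ) *
      (MeasureTheory.condExp (MeasurableSpace.comap X inferInstance) P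
        (fun ω' => |(f (X ω') - f (X' ω')) * F (X ω') (X' ω')|) ω))
    (A B : ℝ) (hA : 0 < A) (hB : 0 < B)
    (hVbd : ∀ᵐ ω ∂P, V ω ≤ A * f (X ω) + B) :
    (∀ l : ℝ, 0 ≤ l → l < 1 / A →
      ∫ ω, Real.exp (l * f (X ω)) ∂P ≤ Real.exp (B * l ^ 2 / (2 * (1 - A * l)))) ∧
    (∀ t : ℝ, 0 ≤ t →
      (P {ω | t ≤ f (X ω)}).toReal ≤ Real.exp (-(t ^ 2) / (2 * B + 2 * A * t))) := by
  -- basic measurability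
  have hgm : Measurable (fun ω => f (X ω)) := hf.comp hX
  have hg'm : Measurable (fun ω => f (X' ω)) := hf.comp hX'
  have hpair : Measurable (fun ω => (X ω, X' ω)) := hX.prodMk hX'
  have hpair' : Measurable (fun ω => (X' ω, X ω)) := hX'.prodMk hX
  have hKm : Measurable (fun ω => F (X ω) (X' ω)) := hFmeas.comp hpair
  have hm0 : MeasurableSpace.comap X (inferInstance : MeasurableSpace 𝒳) ≤
      (inferInstance : MeasurableSpace Ω) := hX.comap_le
  haveI hsf : SigmaFinite (P.trim hm0) := by
    have : IsFiniteMeasure (P.trim hm0) := isFiniteMeasure_trim hm0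
    infer_instance
  -- swap lemmas
  have hswapInt : ∀ (H : 𝒳 × 𝒳 → ℝ), Measurable H →
      ∫ ω, H (X ω, X' ω) ∂P = ∫ ω, H (X' ω, X ω) ∂P := by
    intro H hH
    have h1 : ∫ ω, H (X ω, X' ω) ∂P = ∫ p, H p ∂(P.map (fun ω => (X ω, X' ω))) :=
      (integral_map hpair.aemeasurable hH.aestronglyMeasurable).symm
    have h2 : ∫ p, H p ∂(P.map (fun ω => (X' ω, X ω))) = ∫ ω, H (X' ω, X ω) ∂P :=
      integral_map hpair'.aemeasurable hH.aestronglyMeasurable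
    rw [h1, hexch, h2]
  have hswapIntegrable : ∀ (H : 𝒳 × 𝒳 → ℝ), Measurable H →
      Integrable (fun ω => H (X ω, X' ω)) P → Integrable (fun ω => H (X' ω, X ω)) P := by
    intro H hH h
    have h1 : Integrable H (P.map (fun ω => (X ω, X' ω))) :=
      (integrable_map_measure hH.aestronglyMeasurable hpair.aemeasurable).mpr h
    rw [hexch] at h1
    exact (integrable_map_measure hH.aestronglyMeasurable hpair'.aemeasurable).mp h1
  -- marginal equality and L2 for f(X')
  have hmapeq : P.map X' = P.map X := by
    have h1 : (P.map (fun ω => (X ω, X' ω))).map Prod.fst = P.map X := by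
      rw [Measure.map_map measurable_fst hpair]; rfl
    have h2 : (P.map (fun ω => (X' ω, X ω))).map Prod.fst = P.map X' := by
      rw [Measure.map_map measurable_fst hpair']; rfl
    rw [← h1, ← h2, hexch]
  have hg'2 : Integrable (fun ω => (f (X' ω)) ^ 2) P := by
    have hm : Measurable fun x => (f x) ^ 2 := hf.pow_const 2
    have h2 : Integrable (fun x => (f x) ^ 2) (P.map X) :=
      (integrable_map_measure hm.aestronglyMeasurable hX.aemeasurable).mpr hL2
    rw [← hmapeq] at h2
    exact (integrable_map_measure hm.aestronglyMeasurable hX'.aemeasurable).mp h2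
  -- basic integrabilities
  have habs_sq : ∀ (u : ℝ), |u| ≤ u ^ 2 + 1 := by
    intro u; nlinarith [sq_abs u, sq_nonneg (|u| - 1)]
  have hgInt : Integrable (fun ω => f (X ω)) P := by
    refine (hL2.add (integrable_const 1)).mono' hgm.aestronglyMeasurable ?_
    exact Filter.Eventually.of_forall fun ω => by simpa using habs_sq (f (X ω))
  have hKInt : Integrable (fun ω => F (X ω) (X' ω)) P := by
    refine (hFL2.add (integrable_const 1)).mono' hKm.aestronglyMeasurable ?_
    exact Filter.Eventually.of_forall fun ω => by simpa using habs_sq (F (X ω) (X' ω))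
  -- m0-measurability of functions of X
  have hcomapMeas : ∀ (φ : 𝒳 → ℝ), Measurable φ → StronglyMeasurable[MeasurableSpace.comap X (inferInstance : MeasurableSpace 𝒳)] (fun ω => φ (X ω)) := by
    intro φ hφ
    exact (hφ.comp (Measurable.of_comap_le le_rfl)).stronglyMeasurable
  -- integrability of x*exp(t x) type things
  have hDint : ∀ t : ℝ, Integrable (fun ω => f (X ω) * Real.exp (t * f (X ω))) P := by
    intro t
    refine ((hmgf (t + 1)).add (hmgf (t - 1))).mono'
      (hgm.mul ((Real.measurable_exp.comp (measurable_const.mul hgm)))).aestronglyMeasurable ?_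
    refine Filter.Eventually.of_forall fun ω => ?_
    set u := f (X ω)
    have h1 : |u * Real.exp (t * u)| = |u| * Real.exp (t * u) := by
      rw [abs_mul, abs_of_pos (Real.exp_pos _)]
    calc ‖u * Real.exp (t * u)‖ = |u| * Real.exp (t * u) := h1
      _ ≤ (Real.exp u + Real.exp (-u)) * Real.exp (t * u) :=
          mul_le_mul_of_nonneg_right (aux_abs_le_exps u) (Real.exp_pos _).le
      _ = Real.exp ((t + 1) * u) + Real.exp ((t - 1) * u) := by
          rw [add_mul, ← Real.exp_add, ← Real.exp_add]; ring_nf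
  -- derivative of the mgf
  have hD : ∀ x₀ : ℝ, HasDerivAt (fun l => ∫ ω, Real.exp (l * f (X ω)) ∂P)
      (∫ ω, f (X ω) * Real.exp (x₀ * f (X ω)) ∂P) x₀ := by
    intro x₀
    have hder := hasDerivAt_integral_of_dominated_loc_of_deriv_le (μ := P) (x₀ := x₀)
      (F := fun x ω => Real.exp (x * f (X ω)))
      (F' := fun x ω => f (X ω) * Real.exp (x * f (X ω)))
      (bound := fun ω => Real.exp ((x₀ + 2) * f (X ω)) + 2 * Real.exp (x₀ * f (X ω))
        + Real.exp ((x₀ - 2) * f (X ω)))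
      (Metric.ball_mem_nhds x₀ one_pos)
      (Filter.Eventually.of_forall fun x =>
        (Real.measurable_exp.comp (measurable_const.mul hgm)).aestronglyMeasurable)
      (hmgf x₀)
      (hgm.mul (Real.measurable_exp.comp (measurable_const.mul hgm))).aestronglyMeasurable
      ?_ ?_ ?_
    · exact hder.2
    · refine Filter.Eventually.of_forall fun ω x hx => ?_
      rw [Metric.mem_ball, Real.dist_eq] at hx
      obtain ⟨h1, h2⟩ := abs_lt.mp hx
      set u := f (X ω) with hu
      have hn : ‖u * Real.exp (x * u)‖ = |u| * Real.exp (x * u) := by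
        rw [norm_mul, Real.norm_eq_abs, Real.norm_eq_abs, abs_of_pos (Real.exp_pos _)]
      rw [hn]
      calc |u| * Real.exp (x * u)
          ≤ (Real.exp u + Real.exp (-u)) * Real.exp (x * u) :=
            mul_le_mul_of_nonneg_right (aux_abs_le_exps u) (Real.exp_pos _).le
        _ = Real.exp ((x + 1) * u) + Real.exp ((x - 1) * u) := by
            rw [add_mul, ← Real.exp_add, ← Real.exp_add]; ring_nf
        _ ≤ (Real.exp (x₀ * u) + Real.exp ((x₀ + 2) * u))
            + (Real.exp ((x₀ - 2) * u) + Real.exp (x₀ * u)) := by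
            gcongr ?_ + ?_
            · exact aux_exp_mul_le u (by linarith) (by linarith)
            · exact aux_exp_mul_le u (by linarith) (by linarith)
        _ = Real.exp ((x₀ + 2) * u) + 2 * Real.exp (x₀ * u) + Real.exp ((x₀ - 2) * u) := by
            ring
    · exact ((hmgf (x₀ + 2)).add ((hmgf x₀).const_mul 2)).add (hmgf (x₀ - 2))
    · refine Filter.Eventually.of_forall fun ω x hx => ?_
      have h := (hasDerivAt_mul_const (f (X ω)) (x := x)).exp
      simpa [mul_comm] using h
  -- core differential inequality
  have hcore : ∀ l : ℝ, 0 ≤ l →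
      (∫ ω, f (X ω) * Real.exp (l * f (X ω)) ∂P) ≤
        l * (A * (∫ ω, f (X ω) * Real.exp (l * f (X ω)) ∂P)
          + B * (∫ ω, Real.exp (l * f (X ω)) ∂P)) := by
    intro l hl
    set e : Ω → ℝ := fun ω => Real.exp (l * f (X ω)) with he_def
    set e' : Ω → ℝ := fun ω => Real.exp (l * f (X' ω)) with he'_def
    set K : Ω → ℝ := fun ω => F (X ω) (X' ω) with hK_def
    set W : Ω → ℝ := fun ω => |(f (X ω) - f (X' ω)) * F (X ω) (X' ω)| with hW_def
    have hem : Measurable e := Real.measurable_exp.comp (measurable_const.mul hgm)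
    have he'm : Measurable e' := Real.measurable_exp.comp (measurable_const.mul hg'm)
    have hWm : Measurable W := ((hgm.sub hg'm).mul hKm).abs
    have hesm : StronglyMeasurable[MeasurableSpace.comap X (inferInstance : MeasurableSpace 𝒳)] e :=
      hcomapMeas (fun x => Real.exp (l * f x)) (Real.measurable_exp.comp (measurable_const.mul hf))
    have heInt : Integrable e P := hmgf l
    have hgeInt : Integrable (fun ω => f (X ω) * e ω) P := hDint l
    have he2 : Integrable (fun ω => (e ω) ^ 2) P := by
      have hptr : ∀ ω, (e ω) ^ 2 = Real.exp ((2 * l) * f (X ω)) := by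
        intro ω; rw [he_def]; rw [sq, ← Real.exp_add]; ring_nf
      exact (integrable_congr (Filter.Eventually.of_forall hptr)).mpr (hmgf (2 * l))
    have heK : Integrable (fun ω => e ω * K ω) P := by
      refine ((he2.add hFL2).div_const 2).mono' (hem.mul hKm).aestronglyMeasurable
        (Filter.Eventually.of_forall fun ω => ?_)
      simp only [he_def, hK_def, Pi.add_apply]
      have h1 : ‖Real.exp (l * f (X ω)) * F (X ω) (X' ω)‖
          = Real.exp (l * f (X ω)) * |F (X ω) (X' ω)| := by
        rw [norm_mul, Real.norm_eq_abs, Real.norm_eq_abs, abs_of_pos (Real.exp_pos _)]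
      rw [h1]
      have h2 := sq_nonneg (Real.exp (l * f (X ω)) - |F (X ω) (X' ω)|)
      have h3 := sq_abs (F (X ω) (X' ω))
      nlinarith
    -- step 1 : ∫ e K = ∫ e f(X)
    have hpull1 : MeasureTheory.condExp (MeasurableSpace.comap X inferInstance) P (e * K)
        =ᵐ[P] e * MeasureTheory.condExp (MeasurableSpace.comap X inferInstance) P K :=
      condExp_mul_of_stronglyMeasurable_left hesm (by simpa [Pi.mul_def] using heK) hKInt
    have step1 : ∫ ω, e ω * K ω ∂P = ∫ ω, e ω * f (X ω) ∂P := by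
      calc ∫ ω, e ω * K ω ∂P
          = ∫ ω, (MeasureTheory.condExp (MeasurableSpace.comap X inferInstance) P (e * K)) ω ∂P :=
            (integral_condExp hm0).symm
        _ = ∫ ω, (e * MeasureTheory.condExp (MeasurableSpace.comap X inferInstance) P K) ω ∂P :=
            integral_congr_ae hpull1
        _ = ∫ ω, e ω * f (X ω) ∂P := by
            refine integral_congr_ae ?_
            filter_upwards [hFcond] with ω hω
            simp only [Pi.mul_apply]
            rw [hω]
    -- step 2 : ∫ e K = - ∫ e' K
    have hH1m : Measurable (fun p : 𝒳 × 𝒳 => Real.exp (l * f p.1) * F p.1 p.2) :=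
      (Real.measurable_exp.comp (measurable_const.mul (hf.comp measurable_fst))).mul hFmeas
    have step2 : ∫ ω, e ω * K ω ∂P = - ∫ ω, e' ω * K ω ∂P := by
      have h1 : ∫ ω, Real.exp (l * f (X ω)) * F (X ω) (X' ω) ∂P
          = ∫ ω, Real.exp (l * f (X' ω)) * F (X' ω) (X ω) ∂P :=
        hswapInt (fun p : 𝒳 × 𝒳 => Real.exp (l * f p.1) * F p.1 p.2) hH1m
      simp only [he_def, he'_def, hK_def]
      rw [h1, ← integral_neg]
      refine integral_congr_ae (Filter.Eventually.of_forall fun ω => ?_)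
      show Real.exp (l * f (X' ω)) * F (X' ω) (X ω)
        = -(Real.exp (l * f (X' ω)) * F (X ω) (X' ω))
      rw [hFanti (X' ω) (X ω)]
      ring
    have he'K : Integrable (fun ω => e' ω * K ω) P := by
      have h1 : Integrable (fun ω => Real.exp (l * f (X' ω)) * F (X' ω) (X ω)) P :=
        hswapIntegrable (fun p : 𝒳 × 𝒳 => Real.exp (l * f p.1) * F p.1 p.2) hH1m
          (by simpa [he_def, hK_def] using heK)
      have h2 : (fun ω => e' ω * K ω) = fun ω => -(Real.exp (l * f (X' ω)) * F (X' ω) (X ω)) := by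
        funext ω
        simp only [he'_def, hK_def]
        rw [hFanti (X' ω) (X ω)]
        ring
      rw [h2]
      exact h1.neg
    -- W integrable
    have hWInt : Integrable W P := by
      refine ((hL2.add hg'2).add hFL2).mono' hWm.aestronglyMeasurable
        (Filter.Eventually.of_forall fun ω => ?_)
      simp only [hW_def, Pi.add_apply]
      rw [Real.norm_eq_abs, abs_abs, abs_mul]
      have h1 := sq_nonneg (|f (X ω) - f (X' ω)| - |F (X ω) (X' ω)|)
      have h2 := sq_abs (f (X ω) - f (X' ω))
      have h3 := sq_abs (F (X ω) (X' ω))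
      have h4 := sq_nonneg (f (X ω) + f (X' ω))
      nlinarith
    -- conditional expectation of W
    have hcondW : (MeasureTheory.condExp (MeasurableSpace.comap X inferInstance) P W)
        = fun ω => 2 * V ω := by
      funext ω
      rw [hV]
      ring
    have hVnn : ∀ᵐ ω ∂P, 0 ≤ V ω := by
      have h := condExp_nonneg (m := MeasurableSpace.comap X inferInstance) (μ := P) (f := W)
        (Filter.Eventually.of_forall fun ω => abs_nonneg _)
      filter_upwards [h] with ω hω
      have : (2:ℝ) * V ω = MeasureTheory.condExp (MeasurableSpace.comap X inferInstance) P W ω := by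
        rw [hcondW]
      simp only [Pi.zero_apply] at hω
      linarith
    -- truncation
    have hensm : ∀ n : ℕ, StronglyMeasurable[MeasurableSpace.comap X
        (inferInstance : MeasurableSpace 𝒳)] (fun ω => min (e ω) (n : ℝ)) := fun n =>
      hcomapMeas (fun x => min (Real.exp (l * f x)) (n : ℝ))
        ((Real.measurable_exp.comp (measurable_const.mul hf)).min measurable_const)
    have henb : ∀ (n : ℕ) ω, ‖min (e ω) (n : ℝ)‖ ≤ (n : ℝ) := by
      intro n ω
      rw [Real.norm_eq_abs, abs_of_nonneg (le_min (Real.exp_pos _).le (Nat.cast_nonneg n))]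
      exact min_le_right _ _
    have hprod : ∀ n : ℕ, Integrable (fun ω => min (e ω) (n : ℝ) * W ω) P := fun n =>
      hWInt.bdd_mul (((hensm n).mono hm0).aestronglyMeasurable)
        (Filter.Eventually.of_forall (henb n))
    have htrunc : ∀ n : ℕ, ∫ ω, min (e ω) (n : ℝ) * W ω ∂P
        ≤ ∫ ω, e ω * (2 * (A * f (X ω) + B)) ∂P := by
      intro n
      have hpull := condExp_mul_of_stronglyMeasurable_left (μ := P) (hensm n)
        (by simpa [Pi.mul_def] using hprod n) hWInt
      have h1 : ∫ ω, min (e ω) (n : ℝ) * W ω ∂P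
          = ∫ ω, min (e ω) (n : ℝ) *
            (MeasureTheory.condExp (MeasurableSpace.comap X inferInstance) P W) ω ∂P := by
        calc ∫ ω, min (e ω) (n : ℝ) * W ω ∂P
            = ∫ ω, (MeasureTheory.condExp (MeasurableSpace.comap X inferInstance) P
                ((fun ω => min (e ω) (n : ℝ)) * W)) ω ∂P := (integral_condExp hm0).symm
          _ = _ := integral_congr_ae hpull
      rw [h1]
      have hint1 : Integrable (fun ω => min (e ω) (n : ℝ) *
          (MeasureTheory.condExp (MeasurableSpace.comap X inferInstance) P W) ω) P :=
        integrable_condExp.bdd_mul (((hensm n).mono hm0).aestronglyMeasurable)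
          (Filter.Eventually.of_forall (henb n))
      have hint2 : Integrable (fun ω => e ω * (2 * (A * f (X ω) + B))) P := by
        have hfe : (fun ω => e ω * (2 * (A * f (X ω) + B)))
            = fun ω => (2 * A) * (f (X ω) * e ω) + (2 * B) * e ω := by
          funext ω; ring
        rw [hfe]
        exact (hgeInt.const_mul _).add (heInt.const_mul _)
      refine integral_mono_ae hint1 hint2 ?_
      filter_upwards [hVbd, hVnn] with ω h1ω h2ω
      have hcw : (MeasureTheory.condExp (MeasurableSpace.comap X inferInstance) P W) ω
          = 2 * V ω := by rw [hcondW]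
      rw [hcw]
      have h3 : (0:ℝ) ≤ e ω := (Real.exp_pos _).le
      have h4 : min (e ω) (n : ℝ) ≤ e ω := min_le_left _ _
      have h5 : (0:ℝ) ≤ min (e ω) (n : ℝ) := le_min h3 (Nat.cast_nonneg n)
      nlinarith
    -- value of the bound integral
    have hCval : ∫ ω, e ω * (2 * (A * f (X ω) + B)) ∂P
        = 2 * (A * (∫ ω, f (X ω) * e ω ∂P) + B * (∫ ω, e ω ∂P)) := by
      have hfe : (fun ω => e ω * (2 * (A * f (X ω) + B)))
          = fun ω => (2 * A) * (f (X ω) * e ω) + (2 * B) * e ω := by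
        funext ω; ring
      rw [hfe, integral_add (hgeInt.const_mul _) (heInt.const_mul _),
        integral_const_mul, integral_const_mul]
      ring
    -- monotone convergence to get e * W
    have hmonon : ∀ ω, Monotone (fun n : ℕ => min (e ω) (n : ℝ) * W ω) := by
      intro ω a b hab
      exact mul_le_mul_of_nonneg_right (min_le_min le_rfl (Nat.cast_le.mpr hab)) (abs_nonneg _)
    have htendn : ∀ ω, Filter.Tendsto (fun n : ℕ => min (e ω) (n : ℝ) * W ω)
        Filter.atTop (nhds (e ω * W ω)) := by
      intro ω
      refine Filter.Tendsto.mul_const _ ?_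
      refine tendsto_atTop_of_eventually_const (i₀ := ⌈e ω⌉₊) fun n hn => ?_
      exact min_eq_left ((Nat.le_ceil _).trans (Nat.cast_le.mpr hn))
    have hmeasEW : Measurable (fun ω => e ω * W ω) := hem.mul hWm
    set C : ℝ := ∫ ω, e ω * (2 * (A * f (X ω) + B)) ∂P with hC_def
    have hCnn : (0:ℝ) ≤ C := by
      have h := htrunc 0
      have h0 : (fun ω => min (e ω) ((0:ℕ) : ℝ) * W ω) = fun _ => (0:ℝ) := by
        funext ω
        rw [Nat.cast_zero, min_eq_right (Real.exp_pos _).le, zero_mul]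
      rw [h0] at h
      simpa using h
    have hlin : ∫⁻ ω, ENNReal.ofReal (e ω * W ω) ∂P ≤ ENNReal.ofReal C := by
      have h1 : ∀ ω, (⨆ n : ℕ, ENNReal.ofReal (min (e ω) (n : ℝ) * W ω))
          = ENNReal.ofReal (e ω * W ω) := by
        intro ω
        have hm : Monotone (fun n : ℕ => ENNReal.ofReal (min (e ω) (n : ℝ) * W ω)) :=
          fun a b hab => ENNReal.ofReal_le_ofReal (hmonon ω hab)
        have ht : Filter.Tendsto (fun n : ℕ => ENNReal.ofReal (min (e ω) (n : ℝ) * W ω))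
            Filter.atTop (nhds (ENNReal.ofReal (e ω * W ω))) :=
          (ENNReal.continuous_ofReal.continuousAt).tendsto.comp (htendn ω)
        exact tendsto_nhds_unique (tendsto_atTop_iSup hm) ht
      calc ∫⁻ ω, ENNReal.ofReal (e ω * W ω) ∂P
          = ∫⁻ ω, ⨆ n : ℕ, ENNReal.ofReal (min (e ω) (n : ℝ) * W ω) ∂P :=
            lintegral_congr fun ω => (h1 ω).symm
        _ = ⨆ n : ℕ, ∫⁻ ω, ENNReal.ofReal (min (e ω) (n : ℝ) * W ω) ∂P := by
            refine lintegral_iSup (fun n => ?_) (fun a b hab ω => ENNReal.ofReal_le_ofReal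
              (hmonon ω hab)) 
            exact ((hem.min measurable_const).mul hWm).ennreal_ofReal
        _ ≤ ENNReal.ofReal C := by
            refine iSup_le fun n => ?_
            rw [← ofReal_integral_eq_lintegral_ofReal (hprod n)
              (Filter.Eventually.of_forall fun ω =>
                mul_nonneg (le_min (Real.exp_pos _).le (Nat.cast_nonneg n)) (abs_nonneg _))]
            exact ENNReal.ofReal_le_ofReal (htrunc n)
    have hEWint : Integrable (fun ω => e ω * W ω) P := by
      refine ⟨hmeasEW.aestronglyMeasurable, ?_⟩
      rw [hasFiniteIntegral_iff_ofReal (Filter.Eventually.of_forall fun ω =>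
        mul_nonneg (Real.exp_pos _).le (abs_nonneg _))]
      exact lt_of_le_of_lt hlin ENNReal.ofReal_lt_top
    have hEWle : ∫ ω, e ω * W ω ∂P ≤ C := by
      have h0 : 0 ≤ᵐ[P] fun ω => e ω * W ω := Filter.Eventually.of_forall fun ω =>
        mul_nonneg (Real.exp_pos _).le (abs_nonneg _)
      have heq := ofReal_integral_eq_lintegral_ofReal hEWint h0
      have h2 : ENNReal.ofReal (∫ ω, e ω * W ω ∂P) ≤ ENNReal.ofReal C := heq ▸ hlin
      exact (ENNReal.ofReal_le_ofReal_iff hCnn).mp h2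
    -- e' * W via swap
    have hH2m : Measurable (fun p : 𝒳 × 𝒳 => Real.exp (l * f p.2) * |(f p.1 - f p.2) * F p.1 p.2|) :=
      (Real.measurable_exp.comp (measurable_const.mul (hf.comp measurable_snd))).mul
        (((hf.comp measurable_fst).sub (hf.comp measurable_snd)).mul hFmeas).abs
    have hptW : ∀ ω, Real.exp (l * f (X ω)) * |(f (X' ω) - f (X ω)) * F (X' ω) (X ω)|
        = e ω * W ω := by
      intro ω
      simp only [he_def, hW_def]
      congr 1
      rw [hFanti (X' ω) (X ω)]
      rw [show (f (X' ω) - f (X ω)) * -F (X ω) (X' ω)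
        = (f (X ω) - f (X' ω)) * F (X ω) (X' ω) by ring]
    have hH3m : Measurable (fun p : 𝒳 × 𝒳 => Real.exp (l * f p.1) * |(f p.2 - f p.1) * F p.2 p.1|) :=
      (Real.measurable_exp.comp (measurable_const.mul (hf.comp measurable_fst))).mul
        (((hf.comp measurable_snd).sub (hf.comp measurable_fst)).mul
          (hFmeas.comp measurable_swap)).abs
    have he'W_int : Integrable (fun ω => e' ω * W ω) P := by
      have h0 : Integrable (fun ω => Real.exp (l * f (X ω)) * |(f (X' ω) - f (X ω)) * F (X' ω) (X ω)|) P :=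
        (integrable_congr (Filter.Eventually.of_forall fun ω => (hptW ω))).mpr hEWint
      have h1 : Integrable (fun ω =>
          Real.exp (l * f (X' ω)) * |(f (X ω) - f (X' ω)) * F (X ω) (X' ω)|) P :=
        hswapIntegrable
          (fun p : 𝒳 × 𝒳 => Real.exp (l * f p.1) * |(f p.2 - f p.1) * F p.2 p.1|) hH3m h0
      exact (integrable_congr (Filter.Eventually.of_forall fun ω => by
        simp only [he'_def, hW_def])).mpr h1
    have he'W_eq : ∫ ω, e' ω * W ω ∂P = ∫ ω, e ω * W ω ∂P := by
      have h1 : ∫ ω, Real.exp (l * f (X' ω)) * |(f (X ω) - f (X' ω)) * F (X ω) (X' ω)| ∂P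
          = ∫ ω, Real.exp (l * f (X ω)) * |(f (X' ω) - f (X ω)) * F (X' ω) (X ω)| ∂P :=
        hswapInt
          (fun p : 𝒳 × 𝒳 => Real.exp (l * f p.2) * |(f p.1 - f p.2) * F p.1 p.2|) hH2m
      calc ∫ ω, e' ω * W ω ∂P
          = ∫ ω, Real.exp (l * f (X' ω)) * |(f (X ω) - f (X' ω)) * F (X ω) (X' ω)| ∂P := by
            simp only [he'_def, hW_def]
        _ = ∫ ω, Real.exp (l * f (X ω)) * |(f (X' ω) - f (X ω)) * F (X' ω) (X ω)| ∂P := h1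
        _ = ∫ ω, e ω * W ω ∂P := integral_congr_ae (Filter.Eventually.of_forall hptW)
    -- pointwise bound and conclusion
    have hpt : ∀ ω, (e ω - e' ω) * K ω ≤ (l / 2) * (W ω * (e ω + e' ω)) := by
      intro ω
      simp only [he_def, he'_def, hK_def, hW_def]
      have h1 := aux_abs_exp_sub_exp (l * f (X ω)) (l * f (X' ω))
      have h2 : |l * f (X ω) - l * f (X' ω)| = l * |f (X ω) - f (X' ω)| := by
        rw [show l * f (X ω) - l * f (X' ω) = l * (f (X ω) - f (X' ω)) by ring,
          abs_mul, abs_of_nonneg hl]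
      rw [h2] at h1
      have h3 : (Real.exp (l * f (X ω)) - Real.exp (l * f (X' ω))) * F (X ω) (X' ω)
          ≤ |Real.exp (l * f (X ω)) - Real.exp (l * f (X' ω))| * |F (X ω) (X' ω)| := by
        rw [← abs_mul]; exact le_abs_self _
      have h7 := mul_le_mul_of_nonneg_right h1 (abs_nonneg (F (X ω) (X' ω)))
      rw [abs_mul]
      nlinarith [h3, h7]
    have hsum_int : Integrable (fun ω => (l / 2) * (W ω * (e ω + e' ω))) P := by
      have hfe : (fun ω => (l / 2) * (W ω * (e ω + e' ω)))
          = fun ω => (l / 2) * (e ω * W ω) + (l / 2) * (e' ω * W ω) := by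
        funext ω; ring
      rw [hfe]
      exact (hEWint.const_mul _).add (he'W_int.const_mul _)
    have hdiff_int : Integrable (fun ω => (e ω - e' ω) * K ω) P := by
      have hfe : (fun ω => (e ω - e' ω) * K ω) = fun ω => e ω * K ω - e' ω * K ω := by
        funext ω; ring
      rw [hfe]
      exact heK.sub he'K
    have hmain : ∫ ω, (e ω - e' ω) * K ω ∂P ≤ l * C := by
      calc ∫ ω, (e ω - e' ω) * K ω ∂P
          ≤ ∫ ω, (l / 2) * (W ω * (e ω + e' ω)) ∂P :=
            integral_mono hdiff_int hsum_int hpt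
        _ = (l / 2) * ((∫ ω, e ω * W ω ∂P) + ∫ ω, e' ω * W ω ∂P) := by
            have hfe : (fun ω => (l / 2) * (W ω * (e ω + e' ω)))
                = fun ω => (l / 2) * (e ω * W ω + e' ω * W ω) := by
              funext ω; ring
            rw [hfe, integral_const_mul, integral_add hEWint he'W_int]
        _ = l * ∫ ω, e ω * W ω ∂P := by rw [he'W_eq]; ring
        _ ≤ l * C := by
            rcases eq_or_lt_of_le hl with h | h
            · rw [← h]; simp
            · exact mul_le_mul_of_nonneg_left hEWle hl
    have hsplit : ∫ ω, (e ω - e' ω) * K ω ∂P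
        = (∫ ω, e ω * K ω ∂P) - ∫ ω, e' ω * K ω ∂P := by
      have hfe : (fun ω => (e ω - e' ω) * K ω) = fun ω => e ω * K ω - e' ω * K ω := by
        funext ω; ring
      rw [hfe, integral_sub heK he'K]
    have hcomm : ∫ ω, e ω * f (X ω) ∂P = ∫ ω, f (X ω) * e ω ∂P :=
      integral_congr_ae (Filter.Eventually.of_forall fun ω => mul_comm _ _)
    have hfinal : ∫ ω, f (X ω) * e ω ∂P ≤ l * (A * (∫ ω, f (X ω) * e ω ∂P)
        + B * (∫ ω, e ω ∂P)) := by
      have h1 : 2 * ∫ ω, e ω * K ω ∂P ≤ l * C := by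
        rw [two_mul]
        calc (∫ ω, e ω * K ω ∂P) + ∫ ω, e ω * K ω ∂P
            = (∫ ω, e ω * K ω ∂P) - ∫ ω, e' ω * K ω ∂P := by rw [step2]; ring
          _ = ∫ ω, (e ω - e' ω) * K ω ∂P := hsplit.symm
          _ ≤ l * C := hmain
      have hIJ : ∫ ω, e ω * K ω ∂P = ∫ ω, f (X ω) * e ω ∂P := step1.trans hcomm
      rw [hCval] at h1
      rw [← hIJ] at h1 ⊢
      linarith
    simpa only [he_def] using hfinal
  -- part 1 via ODE comparison
  have part1 : ∀ l : ℝ, 0 ≤ l → l < 1 / A →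
      ∫ ω, Real.exp (l * f (X ω)) ∂P ≤ Real.exp (B * l ^ 2 / (2 * (1 - A * l))) := by
    intro l hl0 hl1
    have hMpos : ∀ x : ℝ, 0 < ∫ ω, Real.exp (x * f (X ω)) ∂P := by
      intro x
      have := ProbabilityTheory.mgf_pos (X := fun ω => f (X ω)) (μ := P) (t := x) (hmgf x)
      simpa [ProbabilityTheory.mgf] using this
    set φ : ℝ → ℝ := fun x => Real.log (∫ ω, Real.exp (x * f (X ω)) ∂P)
      - B * x ^ 2 / (2 * (1 - A * x)) with hφ_def
    have hφd : ∀ x : ℝ, A * x < 1 → HasDerivAt φ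
        ((∫ ω, f (X ω) * Real.exp (x * f (X ω)) ∂P) / (∫ ω, Real.exp (x * f (X ω)) ∂P)
          - B * (2 * x - A * x ^ 2) / (2 * (1 - A * x) ^ 2)) x := by
      intro x hx
      have h1 : HasDerivAt (fun x => Real.log (∫ ω, Real.exp (x * f (X ω)) ∂P))
          ((∫ ω, f (X ω) * Real.exp (x * f (X ω)) ∂P)
            / (∫ ω, Real.exp (x * f (X ω)) ∂P)) x :=
        (hD x).log (hMpos x).ne'
      have hpos : (0:ℝ) < 1 - A * x := by linarith
      have hden : (2 : ℝ) * (1 - A * x) ≠ 0 := by positivity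
      have h2 : HasDerivAt (fun x : ℝ => B * x ^ 2 / (2 * (1 - A * x)))
          (B * (2 * x - A * x ^ 2) / (2 * (1 - A * x) ^ 2)) x := by
        have hn : HasDerivAt (fun x : ℝ => B * x ^ 2) (B * (2 * x)) x := by
          simpa using (hasDerivAt_pow 2 x).const_mul B
        have hd2 : HasDerivAt (fun x : ℝ => 2 * (1 - A * x)) (-(2 * A)) x := by
          have := (((hasDerivAt_const x (1:ℝ)).sub
            ((hasDerivAt_id x).const_mul A))).const_mul (2:ℝ)
          simpa using this
        have h3 := hn.div hd2 hden
        refine h3.congr_deriv ?_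
        rw [div_eq_div_iff (by positivity) (by positivity)]
        ring
      exact h1.sub h2
    have hineq : ∀ x : ℝ, 0 ≤ x → A * x < 1 →
        (∫ ω, f (X ω) * Real.exp (x * f (X ω)) ∂P) / (∫ ω, Real.exp (x * f (X ω)) ∂P)
          - B * (2 * x - A * x ^ 2) / (2 * (1 - A * x) ^ 2) ≤ 0 := by
      intro x hx0 hx1
      have hM := hMpos x
      have hc := hcore x hx0
      have h1 : (0:ℝ) < 1 - A * x := by linarith
      have h2 : (∫ ω, f (X ω) * Real.exp (x * f (X ω)) ∂P)
          / (∫ ω, Real.exp (x * f (X ω)) ∂P) ≤ x * B / (1 - A * x) := by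
        rw [div_le_div_iff₀ hM h1]
        nlinarith [hc]
      have h3 : x * B / (1 - A * x) ≤ B * (2 * x - A * x ^ 2) / (2 * (1 - A * x) ^ 2) := by
        rw [div_le_div_iff₀ h1 (by positivity)]
        nlinarith [mul_nonneg (mul_nonneg (mul_nonneg hA.le hB.le) (sq_nonneg x)) h1.le]
      linarith
    have hsub : ∀ x ∈ Set.Icc (0:ℝ) l, A * x < 1 := by
      intro x hx
      have h := mul_lt_mul_of_pos_left hl1 hA
      rw [mul_one_div, div_self hA.ne'] at h
      have := mul_le_mul_of_nonneg_left hx.2 hA.le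
      linarith
    have hanti : AntitoneOn φ (Set.Icc 0 l) := by
      refine antitoneOn_of_deriv_nonpos (convex_Icc 0 l) ?_ ?_ ?_
      · intro x hx
        exact (hφd x (hsub x hx)).continuousAt.continuousWithinAt
      · intro x hx
        rw [interior_Icc] at hx
        exact (hφd x (hsub x (Set.mem_Icc_of_Ioo hx))).differentiableAt.differentiableWithinAt
      · intro x hx
        rw [interior_Icc] at hx
        rw [(hφd x (hsub x (Set.mem_Icc_of_Ioo hx))).deriv]
        exact hineq x hx.1.le (hsub x (Set.mem_Icc_of_Ioo hx))
    have hφl : φ l ≤ φ 0 := hanti (Set.left_mem_Icc.mpr hl0) (Set.right_mem_Icc.mpr hl0) hl0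
    have hφ0 : φ 0 = 0 := by
      rw [hφ_def]
      simp [measure_univ]
    have hlog : Real.log (∫ ω, Real.exp (l * f (X ω)) ∂P)
        ≤ B * l ^ 2 / (2 * (1 - A * l)) := by
      rw [hφ0] at hφl
      rw [hφ_def] at hφl
      simp only at hφl
      linarith
    exact (Real.log_le_iff_le_exp (hMpos l)).mp hlog
  refine ⟨part1, ?_⟩
  intro t ht
  have hBAt : (0:ℝ) < B + A * t := by nlinarith
  have hl0 : 0 ≤ t / (B + A * t) := div_nonneg ht hBAt.le
  have hl1 : t / (B + A * t) < 1 / A := by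
    rw [div_lt_div_iff₀ hBAt hA]
    nlinarith
  have hmgfle := part1 _ hl0 hl1
  have hcher := ProbabilityTheory.measure_ge_le_exp_mul_mgf
    (X := fun ω => f (X ω)) (μ := P) (t := t / (B + A * t)) t hl0 (hmgf _)
  have hmgf_eq : ProbabilityTheory.mgf (fun ω => f (X ω)) P (t / (B + A * t))
      = ∫ ω, Real.exp ((t / (B + A * t)) * f (X ω)) ∂P := rfl
  rw [hmgf_eq] at hcher
  calc (P {ω | t ≤ f (X ω)}).toReal
      ≤ Real.exp (-(t / (B + A * t)) * t)
        * ∫ ω, Real.exp ((t / (B + A * t)) * f (X ω)) ∂P := hcher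
    _ ≤ Real.exp (-(t / (B + A * t)) * t)
        * Real.exp (B * (t / (B + A * t)) ^ 2 / (2 * (1 - A * (t / (B + A * t))))) :=
        mul_le_mul_of_nonneg_left hmgfle (Real.exp_pos _).le
    _ = Real.exp (-(t / (B + A * t)) * t
        + B * (t / (B + A * t)) ^ 2 / (2 * (1 - A * (t / (B + A * t))))) :=
        (Real.exp_add _ _).symm
    _ = Real.exp (-(t ^ 2) / (2 * B + 2 * A * t)) := by
        congr 1
        have h1 : 1 - A * (t / (B + A * t)) = B / (B + A * t) := by
          field_simp
          ring
        rw [h1]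
        have h2 : (B + A * t) ≠ 0 := hBAt.ne'
        have h3 : (2 * B + 2 * A * t) ≠ 0 := by positivity
        field_simp
        ring
end
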